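/- If two constructible persistence modules F and G are interleaved for some ε ≥ 0, then there is a minimum ε ≥ 0 for which they are ε-interleaved; i.e., the set of interleaving parameters attains its infimum. -/

import Mathlib

open CategoryTheory
open scoped ENNReal

variable {C : Type*} [Category C]

/-- The shift functor on the poset `(ℝ, ≤)` viewed as a category: `r ↦ r + ε`. -/
def Shift (ε : ℝ) : ℝ ⥤ ℝ where
  obj r := r + ε
  map {r r'} f := homOfLE (by linarith [leOfHom f])

/-- `F` and `G` are `ε`-interleaved (for `ε ≥ 0`). -/
def Interleaved (ε : ℝ) (F G : ℝ ⥤ C) : Prop :=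
  ∃ (hε : 0 ≤ ε) (φ : F ⟶ Shift ε ⋙ G) (ψ : G ⟶ Shift ε ⋙ F),
    (∀ r : ℝ, φ.app r ≫ ψ.app (r + ε) =
      F.map (homOfLE (by linarith : r ≤ r + ε + ε))) ∧
    (∀ r : ℝ, ψ.app r ≫ φ.app (r + ε) =
      G.map (homOfLE (by linarith : r ≤ r + ε + ε)))

/-- The interleaving distance, valued in `ℝ≥0∞`. -/
noncomputable def interleavingDist (F G : ℝ ⥤ C) : ℝ≥0∞ :=
  sInf {d : ℝ≥0∞ | ∃ ε : ℝ, d = ENNReal.ofReal ε ∧ Interleaved ε F G}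

/-- A persistence module `F : (ℝ,≤) → C` is constructible with respect to a finite set `S`:
below `S` it is constantly an identity object `e`, and it is an isomorphism on any
interval containing no point of `S`. -/
def Constructible (F : ℝ ⥤ C) : Prop :=
  ∃ S : Finset ℝ,
    (∀ p q : ℝ, ∀ h : p ≤ q, Set.Ioc p q ∩ (S : Set ℝ) = ∅ → IsIso (F.map (homOfLE h))) ∧
    ∃ (e : C) (he : ∀ p : ℝ, (∀ s ∈ S, p < s) → F.obj p = e),
      ∀ (p q : ℝ) (h : p ≤ q) (hp : ∀ s ∈ S, p < s) (hq : ∀ s ∈ S, q < s),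
        F.map (homOfLE h) = eqToHom ((he p hp).trans (he q hq).symm)

attribute [reducible] Shift

namespace IntAux

/-- `T` has no point in the half-open interval `(a, b]`. -/
def NoT (T : Finset ℝ) (a b : ℝ) : Prop := Set.Ioc a b ∩ (T : Set ℝ) = ∅

lemma noT_iff {T : Finset ℝ} {a b : ℝ} : NoT T a b ↔ ∀ u ∈ T, ¬(a < u ∧ u ≤ b) := by
  unfold NoT
  rw [Set.eq_empty_iff_forall_notMem]
  constructor
  · intro h u hu hab
    exact h u ⟨Set.mem_Ioc.mpr hab, by exact_mod_cast hu⟩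
  · rintro h u ⟨h1, h2⟩
    exact h u (by exact_mod_cast h2) (Set.mem_Ioc.mp h1)

lemma map_map (F : ℝ ⥤ C) {a b c : ℝ} (h1 : a ≤ b) (h2 : b ≤ c) :
    F.map (homOfLE h1) ≫ F.map (homOfLE h2) = F.map (homOfLE (h1.trans h2)) := by
  rw [← F.map_comp, homOfLE_comp]

lemma nat' {F G : ℝ ⥤ C} {ε : ℝ} (φ : F ⟶ Shift ε ⋙ G) {a b : ℝ} (h : a ≤ b) :
    F.map (homOfLE h) ≫ φ.app b = φ.app a ≫ G.map (homOfLE (add_le_add_left h ε)) :=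
  φ.naturality (homOfLE h)

lemma exists_great (T : Finset ℝ) (m ε : ℝ) (hm0 : 0 ≤ m) (hme : m ≤ ε)
    (gap1 : ∀ t ∈ T, ∀ u ∈ T, ¬(m < t - u ∧ t - u ≤ ε))
    (gap2 : ∀ t ∈ T, ∀ u ∈ T, ¬(2*m < t - u ∧ t - u ≤ 2*ε)) (r : ℝ) :
    ∃ ρ, ρ ≤ r ∧ NoT T ρ r ∧ NoT T (ρ+m) (ρ+ε) ∧ NoT T (ρ+m+m) (ρ+m+ε) ∧
      NoT T (ρ+m+ε) (ρ+ε+ε) := by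
  classical
  by_cases hne : (T.filter (fun v => v ≤ r)).Nonempty
  · set ρ := (T.filter (fun v => v ≤ r)).max' hne with hρdef
    have hmem : ρ ∈ T.filter (fun v => v ≤ r) := Finset.max'_mem _ hne
    rw [Finset.mem_filter] at hmem
    refine ⟨ρ, hmem.2, ?_, ?_, ?_, ?_⟩
    · rw [noT_iff]
      rintro u hu ⟨h1, h2⟩
      have : u ≤ ρ := Finset.le_max' (T.filter (fun v => v ≤ r)) u (Finset.mem_filter.mpr ⟨hu, h2⟩)
      linarith
    · rw [noT_iff]
      rintro u hu ⟨h1, h2⟩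
      exact gap1 u hu ρ hmem.1 ⟨by linarith, by linarith⟩
    · rw [noT_iff]
      rintro u hu ⟨h1, h2⟩
      exact gap2 u hu ρ hmem.1 ⟨by linarith, by linarith⟩
    · rw [noT_iff]
      rintro u hu ⟨h1, h2⟩
      exact gap2 u hu ρ hmem.1 ⟨by linarith, by linarith⟩
  · have hlt : ∀ u ∈ T, r < u := by
      intro u hu
      by_contra hc
      exact hne ⟨u, Finset.mem_filter.mpr ⟨hu, not_lt.mp hc⟩⟩
    by_cases hT : T.Nonempty
    · set c := min r (T.min' hT - ε - ε - 1) with hcdef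
      have hc1 : c ≤ r := min_le_left _ _
      have hc2 : c ≤ T.min' hT - ε - ε - 1 := min_le_right _ _
      have key : ∀ b, b ≤ c + ε + ε → NoT T c b := by
        intro b hb
        rw [noT_iff]
        rintro u hu ⟨h1, h2⟩
        have := T.min'_le u hu
        linarith
      refine ⟨c, hc1, ?_, ?_, ?_, ?_⟩
      · rw [noT_iff]
        rintro u hu ⟨h1, h2⟩
        exact absurd (hlt u hu) (not_lt.mpr h2)
      · exact noT_iff.mpr (fun u hu h => (noT_iff.mp (key (c+ε) (by linarith))) u hu
          ⟨by linarith [h.1], h.2⟩)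
      · exact noT_iff.mpr (fun u hu h => (noT_iff.mp (key (c+m+ε) (by linarith))) u hu
          ⟨by linarith [h.1], h.2⟩)
      · exact noT_iff.mpr (fun u hu h => (noT_iff.mp (key (c+ε+ε) (by linarith))) u hu
          ⟨by linarith [h.1], h.2⟩)
    · rw [Finset.not_nonempty_iff_eq_empty] at hT
      subst hT
      refine ⟨r, le_rfl, ?_, ?_, ?_, ?_⟩ <;> simp [NoT]


/-- The candidate component `F.obj r ⟶ G.obj (r+m)` built from `φ` at a good point `ρ`. -/
noncomputable def PhiApp (F G : ℝ ⥤ C) (m ε : ℝ) (hme : m ≤ ε) (φ : F ⟶ Shift ε ⋙ G)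
    {r ρ : ℝ} (hle : ρ ≤ r)
    (h1 : IsIso (F.map (homOfLE hle)))
    (h2 : IsIso (G.map (homOfLE (show ρ + m ≤ ρ + ε by linarith)))) :
    F.obj r ⟶ G.obj (r + m) :=
  letI := h1; letI := h2
  inv (F.map (homOfLE hle)) ≫ φ.app ρ ≫
    inv (G.map (homOfLE (show ρ + m ≤ ρ + ε by linarith))) ≫
    G.map (homOfLE (show ρ + m ≤ r + m by linarith))

lemma chi_natural (F G : ℝ ⥤ C) (m ε : ℝ) (hme : m ≤ ε) (φ : F ⟶ Shift ε ⋙ G)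
    {ρ ρ' : ℝ} (h : ρ ≤ ρ')
    (h2 : IsIso (G.map (homOfLE (show ρ + m ≤ ρ + ε by linarith))))
    (h2' : IsIso (G.map (homOfLE (show ρ' + m ≤ ρ' + ε by linarith)))) :
    φ.app ρ ≫ inv (G.map (homOfLE (show ρ + m ≤ ρ + ε by linarith))) ≫
        G.map (homOfLE (show ρ + m ≤ ρ' + m by linarith)) =
      F.map (homOfLE h) ≫ φ.app ρ' ≫
        inv (G.map (homOfLE (show ρ' + m ≤ ρ' + ε by linarith))) := by
  letI := h2; letI := h2'
  symm
  rw [← Category.assoc, IsIso.comp_inv_eq, nat' φ h]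
  simp only [Category.assoc]
  congr 1
  rw [IsIso.eq_inv_comp, map_map, map_map]

lemma PhiApp_indep_le (F G : ℝ ⥤ C) (m ε : ℝ) (hme : m ≤ ε) (φ : F ⟶ Shift ε ⋙ G)
    {r ρ ρ' : ℝ} (h : ρ ≤ ρ') (hle : ρ ≤ r) (hle' : ρ' ≤ r)
    (h1 : IsIso (F.map (homOfLE hle))) (h1' : IsIso (F.map (homOfLE hle')))
    (h2 : IsIso (G.map (homOfLE (show ρ + m ≤ ρ + ε by linarith))))
    (h2' : IsIso (G.map (homOfLE (show ρ' + m ≤ ρ' + ε by linarith)))) :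
    PhiApp F G m ε hme φ hle h1 h2 = PhiApp F G m ε hme φ hle' h1' h2' := by
  letI := h1; letI := h1'; letI := h2; letI := h2'
  unfold PhiApp
  have e0 : G.map (homOfLE (show ρ + m ≤ r + m by linarith)) =
      G.map (homOfLE (show ρ + m ≤ ρ' + m by linarith)) ≫
      G.map (homOfLE (show ρ' + m ≤ r + m by linarith)) := (map_map G _ _).symm
  rw [e0]
  have key := chi_natural F G m ε hme φ h h2 h2'
  have e2 : inv (F.map (homOfLE hle)) ≫ F.map (homOfLE h) = inv (F.map (homOfLE hle')) := by
    rw [IsIso.inv_comp_eq, IsIso.eq_comp_inv, map_map]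
  calc inv (F.map (homOfLE hle)) ≫ φ.app ρ ≫
        inv (G.map (homOfLE (show ρ + m ≤ ρ + ε by linarith))) ≫
        (G.map (homOfLE (show ρ + m ≤ ρ' + m by linarith)) ≫
          G.map (homOfLE (show ρ' + m ≤ r + m by linarith)))
      = inv (F.map (homOfLE hle)) ≫ (φ.app ρ ≫
          inv (G.map (homOfLE (show ρ + m ≤ ρ + ε by linarith))) ≫
          G.map (homOfLE (show ρ + m ≤ ρ' + m by linarith))) ≫
          G.map (homOfLE (show ρ' + m ≤ r + m by linarith)) := by
        simp only [Category.assoc]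
    _ = inv (F.map (homOfLE hle)) ≫ (F.map (homOfLE h) ≫ φ.app ρ' ≫
          inv (G.map (homOfLE (show ρ' + m ≤ ρ' + ε by linarith)))) ≫
          G.map (homOfLE (show ρ' + m ≤ r + m by linarith)) := by rw [key]
    _ = (inv (F.map (homOfLE hle)) ≫ F.map (homOfLE h)) ≫ φ.app ρ' ≫
          inv (G.map (homOfLE (show ρ' + m ≤ ρ' + ε by linarith))) ≫
          G.map (homOfLE (show ρ' + m ≤ r + m by linarith)) := by
        simp only [Category.assoc]
    _ = inv (F.map (homOfLE hle')) ≫ φ.app ρ' ≫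
          inv (G.map (homOfLE (show ρ' + m ≤ ρ' + ε by linarith))) ≫
          G.map (homOfLE (show ρ' + m ≤ r + m by linarith)) := by rw [e2]

lemma PhiApp_indep (F G : ℝ ⥤ C) (m ε : ℝ) (hme : m ≤ ε) (φ : F ⟶ Shift ε ⋙ G)
    {r ρ ρ' : ℝ} (hle : ρ ≤ r) (hle' : ρ' ≤ r)
    (h1 : IsIso (F.map (homOfLE hle))) (h1' : IsIso (F.map (homOfLE hle')))
    (h2 : IsIso (G.map (homOfLE (show ρ + m ≤ ρ + ε by linarith))))
    (h2' : IsIso (G.map (homOfLE (show ρ' + m ≤ ρ' + ε by linarith)))) :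
    PhiApp F G m ε hme φ hle h1 h2 = PhiApp F G m ε hme φ hle' h1' h2' := by
  rcases le_total ρ ρ' with h | h
  · exact PhiApp_indep_le F G m ε hme φ h hle hle' h1 h1' h2 h2'
  · exact (PhiApp_indep_le F G m ε hme φ h hle' hle h1' h1 h2' h2).symm

lemma noT_mono {T : Finset ℝ} {a b a' b' : ℝ} (ha : a ≤ a') (hb : b' ≤ b)
    (h : NoT T a b) : NoT T a' b' := by
  rw [noT_iff] at h ⊢
  rintro u hu ⟨h1, h2⟩
  exact h u hu ⟨lt_of_le_of_lt ha h1, h2.trans hb⟩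

lemma map_map_assoc (F : ℝ ⥤ C) {a b c : ℝ} (h1 : a ≤ b) (h2 : b ≤ c) {Z : C}
    (g : F.obj c ⟶ Z) :
    F.map (homOfLE h1) ≫ F.map (homOfLE h2) ≫ g = F.map (homOfLE (h1.trans h2)) ≫ g := by
  rw [← Category.assoc, map_map]

lemma PhiApp_natural (F G : ℝ ⥤ C) (T : Finset ℝ) (m ε : ℝ) (hme : m ≤ ε)
    (isoF : ∀ (p q : ℝ) (h : p ≤ q), NoT T p q → IsIso (F.map (homOfLE h)))
    (isoG : ∀ (p q : ℝ) (h : p ≤ q), NoT T p q → IsIso (G.map (homOfLE h)))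
    (φ : F ⟶ Shift ε ⋙ G)
    {r r' ρ ρ' : ℝ} (hrr : r ≤ r')
    (hle : ρ ≤ r) (hIoc : NoT T ρ r) (hi : NoT T (ρ+m) (ρ+ε))
    (hle' : ρ' ≤ r') (hIoc' : NoT T ρ' r') (hi' : NoT T (ρ'+m) (ρ'+ε)) :
    PhiApp F G m ε hme φ hle (isoF _ _ hle hIoc) (isoG _ _ _ hi) ≫
        G.map (homOfLE (show r + m ≤ r' + m by linarith)) =
      F.map (homOfLE hrr) ≫
        PhiApp F G m ε hme φ hle' (isoF _ _ hle' hIoc') (isoG _ _ _ hi') := by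
  letI := isoF _ _ hle hIoc; letI := isoF _ _ hle' hIoc'
  letI := isoG (ρ+m) (ρ+ε) (show ρ+m ≤ ρ+ε by linarith) hi
  letI := isoG (ρ'+m) (ρ'+ε) (show ρ'+m ≤ ρ'+ε by linarith) hi'
  rcases le_total ρ' r with hc | hc
  · -- ρ' ≤ r : replace the good point for r by ρ'
    have hIoc'' : NoT T ρ' r := noT_mono le_rfl hrr hIoc'
    letI := isoF _ _ hc hIoc''
    rw [PhiApp_indep F G m ε hme φ hle hc (isoF _ _ hle hIoc) (isoF _ _ hc hIoc'')
      (isoG _ _ _ hi) (isoG _ _ _ hi')]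
    unfold PhiApp
    rw [← cancel_epi (F.map (homOfLE hc))]
    simp only [Category.assoc, IsIso.hom_inv_id_assoc, map_map_assoc, map_map]
  · -- r ≤ ρ'
    have hρρ' : ρ ≤ ρ' := hle.trans hc
    unfold PhiApp
    rw [← cancel_epi (F.map (homOfLE hle))]
    simp only [Category.assoc, IsIso.hom_inv_id_assoc, map_map_assoc, map_map]
    have esplit : F.map (homOfLE (hle.trans hrr)) =
        F.map (homOfLE hρρ') ≫ F.map (homOfLE hle') := (map_map F hρρ' hle').symm
    rw [esplit]
    simp only [Category.assoc, IsIso.hom_inv_id_assoc]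
    have key := chi_natural F G m ε hme φ hρρ' (isoG _ _ _ hi) (isoG _ _ _ hi')
    calc φ.app ρ ≫ inv (G.map (homOfLE (show ρ + m ≤ ρ + ε by linarith))) ≫
          G.map (homOfLE (show ρ + m ≤ r' + m by linarith))
        = (φ.app ρ ≫ inv (G.map (homOfLE (show ρ + m ≤ ρ + ε by linarith))) ≫
            G.map (homOfLE (show ρ + m ≤ ρ' + m by linarith))) ≫
            G.map (homOfLE (show ρ' + m ≤ r' + m by linarith)) := by
          simp only [Category.assoc, map_map]
      _ = (F.map (homOfLE hρρ') ≫ φ.app ρ' ≫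
            inv (G.map (homOfLE (show ρ' + m ≤ ρ' + ε by linarith)))) ≫
            G.map (homOfLE (show ρ' + m ≤ r' + m by linarith)) := by rw [key]
      _ = F.map (homOfLE hρρ') ≫ φ.app ρ' ≫
            inv (G.map (homOfLE (show ρ' + m ≤ ρ' + ε by linarith))) ≫
            G.map (homOfLE (show ρ' + m ≤ r' + m by linarith)) := by
          simp only [Category.assoc]

lemma half (F G : ℝ ⥤ C) (T : Finset ℝ) (m ε : ℝ) (hm0 : 0 ≤ m) (hme : m ≤ ε)
    (isoF : ∀ (p q : ℝ) (h : p ≤ q), NoT T p q → IsIso (F.map (homOfLE h)))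
    (isoG : ∀ (p q : ℝ) (h : p ≤ q), NoT T p q → IsIso (G.map (homOfLE h)))
    (gap1 : ∀ t ∈ T, ∀ u ∈ T, ¬(m < t - u ∧ t - u ≤ ε))
    (gap2 : ∀ t ∈ T, ∀ u ∈ T, ¬(2*m < t - u ∧ t - u ≤ 2*ε))
    (φ : F ⟶ Shift ε ⋙ G) :
    ∃ φ₀ : F ⟶ Shift m ⋙ G,
      ∀ (r ρ : ℝ) (hle : ρ ≤ r) (hIoc : NoT T ρ r) (hi : NoT T (ρ+m) (ρ+ε)),
        φ₀.app r = PhiApp F G m ε hme φ hle (isoF _ _ hle hIoc)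
          (isoG (ρ+m) (ρ+ε) (show ρ+m ≤ ρ+ε by linarith) hi) := by
  choose g hg1 hg2 hg3 hg4 hg5 using exists_great T m ε hm0 hme gap1 gap2
  refine ⟨{ app := fun r => PhiApp F G m ε hme φ (hg1 r) (isoF _ _ (hg1 r) (hg2 r))
              (isoG _ _ (show g r + m ≤ g r + ε by linarith) (hg3 r)),
            naturality := ?_ }, ?_⟩
  · intro a b f
    have hab : a ≤ b := leOfHom f
    have hnat := PhiApp_natural F G T m ε hme isoF isoG φ hab
      (hg1 a) (hg2 a) (hg3 a) (hg1 b) (hg2 b) (hg3 b)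
    have hf : f = homOfLE hab := rfl
    rw [hf]
    exact hnat.symm
  · intro r ρ hle hIoc hi
    exact PhiApp_indep F G m ε hme φ (hg1 r) hle
      (isoF _ _ (hg1 r) (hg2 r)) (isoF _ _ hle hIoc)
      (isoG _ _ (show g r + m ≤ g r + ε by linarith) (hg3 r))
      (isoG _ _ (show ρ + m ≤ ρ + ε by linarith) hi)

lemma great_triangle (F G : ℝ ⥤ C) (m ε : ℝ) (hm0 : 0 ≤ m) (hme : m ≤ ε)
    (φ : F ⟶ Shift ε ⋙ G) (ψ : G ⟶ Shift ε ⋙ F)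
    (tri : ∀ x : ℝ, φ.app x ≫ ψ.app (x + ε) =
      F.map (homOfLE (show x ≤ x + ε + ε by linarith)))
    {ρ : ℝ}
    (i1 : IsIso (G.map (homOfLE (show ρ + m ≤ ρ + ε by linarith))))
    (i2 : IsIso (F.map (homOfLE (show ρ + m + m ≤ ρ + m + ε by linarith))))
    (i3 : IsIso (F.map (homOfLE (show ρ + m + ε ≤ ρ + ε + ε by linarith)))) :
    (φ.app ρ ≫ inv (G.map (homOfLE (show ρ + m ≤ ρ + ε by linarith)))) ≫
      (ψ.app (ρ + m) ≫ inv (F.map (homOfLE (show ρ + m + m ≤ ρ + m + ε by linarith)))) =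
      F.map (homOfLE (show ρ ≤ ρ + m + m by linarith)) := by
  letI := i1; letI := i2; letI := i3
  have n1 : G.map (homOfLE (show ρ + m ≤ ρ + ε by linarith)) ≫ ψ.app (ρ + ε) =
      ψ.app (ρ + m) ≫ F.map (homOfLE (show ρ + m + ε ≤ ρ + ε + ε by linarith)) :=
    ψ.naturality (homOfLE (show ρ + m ≤ ρ + ε by linarith))
  have step1 : φ.app ρ ≫ inv (G.map (homOfLE (show ρ + m ≤ ρ + ε by linarith))) ≫
      ψ.app (ρ + m) = F.map (homOfLE (show ρ ≤ ρ + m + ε by linarith)) := by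
    rw [← cancel_mono (F.map (homOfLE (show ρ + m + ε ≤ ρ + ε + ε by linarith)))]
    simp only [Category.assoc]
    rw [← n1, IsIso.inv_hom_id_assoc, tri ρ, map_map]
  rw [← cancel_mono (F.map (homOfLE (show ρ + m + m ≤ ρ + m + ε by linarith)))]
  simp only [Category.assoc, IsIso.inv_hom_id, Category.comp_id]
  rw [map_map]
  simp only [← Category.assoc] at step1 ⊢
  exact step1

lemma triangle_half (F G : ℝ ⥤ C) (T : Finset ℝ) (m ε : ℝ) (hm0 : 0 ≤ m) (hme : m ≤ ε)
    (isoF : ∀ (p q : ℝ) (h : p ≤ q), NoT T p q → IsIso (F.map (homOfLE h)))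
    (isoG : ∀ (p q : ℝ) (h : p ≤ q), NoT T p q → IsIso (G.map (homOfLE h)))
    (gap1 : ∀ t ∈ T, ∀ u ∈ T, ¬(m < t - u ∧ t - u ≤ ε))
    (gap2 : ∀ t ∈ T, ∀ u ∈ T, ¬(2*m < t - u ∧ t - u ≤ 2*ε))
    (φ : F ⟶ Shift ε ⋙ G) (ψ : G ⟶ Shift ε ⋙ F)
    (tri : ∀ x : ℝ, φ.app x ≫ ψ.app (x + ε) =
      F.map (homOfLE (show x ≤ x + ε + ε by linarith)))
    (φ₀ : F ⟶ Shift m ⋙ G) (ψ₀ : G ⟶ Shift m ⋙ F)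
    (hφ₀ : ∀ (r ρ : ℝ) (hle : ρ ≤ r) (hIoc : NoT T ρ r) (hi : NoT T (ρ+m) (ρ+ε)),
      φ₀.app r = PhiApp F G m ε hme φ hle (isoF _ _ hle hIoc)
        (isoG (ρ+m) (ρ+ε) (show ρ+m ≤ ρ+ε by linarith) hi))
    (hψ₀ : ∀ (r ρ : ℝ) (hle : ρ ≤ r) (hIoc : NoT T ρ r) (hi : NoT T (ρ+m) (ρ+ε)),
      ψ₀.app r = PhiApp G F m ε hme ψ hle (isoG _ _ hle hIoc)
        (isoF (ρ+m) (ρ+ε) (show ρ+m ≤ ρ+ε by linarith) hi))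
    (r : ℝ) :
    φ₀.app r ≫ ψ₀.app (r + m) = F.map (homOfLE (show r ≤ r + m + m by linarith)) := by
  obtain ⟨ρ, hle, hIoc, hi1, hi2, hi3⟩ := exists_great T m ε hm0 hme gap1 gap2 r
  letI iF1 := isoF _ _ hle hIoc
  letI iG1 := isoG (ρ+m) (ρ+ε) (show ρ+m ≤ ρ+ε by linarith) hi1
  letI iF2 := isoF (ρ+m+m) (ρ+m+ε) (show ρ+m+m ≤ ρ+m+ε by linarith) hi2
  letI iF3 := isoF (ρ+m+ε) (ρ+ε+ε) (show ρ+m+ε ≤ ρ+ε+ε by linarith) hi3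
  rw [hφ₀ r ρ hle hIoc hi1]
  -- ψ₀ at ρ+m, using the good point ρ+m itself
  have hIoc2 : NoT T (ρ+m) (ρ+m) := by
    rw [noT_iff]; rintro u hu ⟨u1, u2⟩; linarith
  have hψρm := hψ₀ (ρ+m) (ρ+m) le_rfl hIoc2 (by
    have : NoT T (ρ+m+m) (ρ+m+ε) := hi2
    exact this)
  -- naturality of ψ₀ from ρ+m to r+m
  have hnat : G.map (homOfLE (show ρ + m ≤ r + m by linarith)) ≫ ψ₀.app (r + m) =
      ψ₀.app (ρ + m) ≫ F.map (homOfLE (show ρ + m + m ≤ r + m + m by linarith)) :=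
    ψ₀.naturality (homOfLE (show ρ + m ≤ r + m by linarith))
  unfold PhiApp
  simp only [Category.assoc]
  rw [hnat, hψρm]
  unfold PhiApp
  have hmapid : G.map (homOfLE (le_refl (ρ+m))) = 𝟙 _ := by
    have : homOfLE (le_refl (ρ+m)) = 𝟙 (ρ+m) := rfl
    rw [this, G.map_id]
  letI iGid := isoG (ρ+m) (ρ+m) (le_refl (ρ+m)) hIoc2
  have great := great_triangle F G m ε hm0 hme φ ψ tri iG1 iF2 iF3
  calc inv (F.map (homOfLE hle)) ≫ φ.app ρ ≫
        inv (G.map (homOfLE (show ρ + m ≤ ρ + ε by linarith))) ≫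
        ((inv (G.map (homOfLE (le_refl (ρ+m)))) ≫ ψ.app (ρ+m) ≫
          inv (F.map (homOfLE (show ρ + m + m ≤ ρ + m + ε by linarith))) ≫
          F.map (homOfLE (show ρ + m + m ≤ ρ + m + m by linarith))) ≫
          F.map (homOfLE (show ρ + m + m ≤ r + m + m by linarith)))
      = inv (F.map (homOfLE hle)) ≫
        ((φ.app ρ ≫ inv (G.map (homOfLE (show ρ + m ≤ ρ + ε by linarith)))) ≫
         (ψ.app (ρ+m) ≫ inv (F.map (homOfLE (show ρ + m + m ≤ ρ + m + ε by linarith))))) ≫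
          F.map (homOfLE (show ρ + m + m ≤ r + m + m by linarith)) := by
        have hinvid : inv (G.map (homOfLE (le_refl (ρ+m)))) = 𝟙 _ := by
          apply IsIso.inv_eq_of_hom_inv_id
          rw [Category.comp_id, hmapid]
        have hFmapid : F.map (homOfLE (show ρ + m + m ≤ ρ + m + m by linarith)) = 𝟙 _ := by
          have h' : homOfLE (show ρ + m + m ≤ ρ + m + m by linarith) = 𝟙 (ρ+m+m) := rfl
          rw [h', F.map_id]
        rw [hinvid, hFmapid]
        simp only [Category.id_comp, Category.comp_id, Category.assoc]
    _ = inv (F.map (homOfLE hle)) ≫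
          F.map (homOfLE (show ρ ≤ ρ + m + m by linarith)) ≫
          F.map (homOfLE (show ρ + m + m ≤ r + m + m by linarith)) := by rw [great]
    _ = F.map (homOfLE (show r ≤ r + m + m by linarith)) := by
        rw [map_map, IsIso.inv_comp_eq, map_map]

lemma transport (F G : ℝ ⥤ C) (T : Finset ℝ) (m ε : ℝ) (hm0 : 0 ≤ m) (hme : m ≤ ε)
    (isoF : ∀ (p q : ℝ) (h : p ≤ q), NoT T p q → IsIso (F.map (homOfLE h)))
    (isoG : ∀ (p q : ℝ) (h : p ≤ q), NoT T p q → IsIso (G.map (homOfLE h)))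
    (gap1 : ∀ t ∈ T, ∀ u ∈ T, ¬(m < t - u ∧ t - u ≤ ε))
    (gap2 : ∀ t ∈ T, ∀ u ∈ T, ¬(2*m < t - u ∧ t - u ≤ 2*ε))
    (h : Interleaved ε F G) : Interleaved m F G := by
  obtain ⟨hε, φ, ψ, tri1, tri2⟩ := h
  obtain ⟨φ₀, hφ₀⟩ := half F G T m ε hm0 hme isoF isoG gap1 gap2 φ
  obtain ⟨ψ₀, hψ₀⟩ := half G F T m ε hm0 hme isoG isoF gap1 gap2 ψ
  exact ⟨hm0, φ₀, ψ₀,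
    triangle_half F G T m ε hm0 hme isoF isoG gap1 gap2 φ ψ tri1 φ₀ ψ₀ hφ₀ hψ₀,
    triangle_half G F T m ε hm0 hme isoG isoF gap1 gap2 ψ φ tri2 ψ₀ φ₀ hψ₀ hφ₀⟩


end IntAux

/-- If two constructible persistence modules are interleaved for some `ε`, then there is a
minimum `ε` at which they are interleaved. -/
theorem interleaving_min_attained (F G : ℝ ⥤ C)
    (hF : Constructible F) (hG : Constructible G)
    (h : ∃ ε : ℝ, Interleaved ε F G) :
    ∃ ε₀ : ℝ, Interleaved ε₀ F G ∧ ∀ ε : ℝ, Interleaved ε F G → ε₀ ≤ ε := by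
  classical
  obtain ⟨SF, isoSF, -⟩ := hF
  obtain ⟨SG, isoSG, -⟩ := hG
  set T : Finset ℝ := SF ∪ SG with hT
  have isoF : ∀ (p q : ℝ) (h : p ≤ q), IntAux.NoT T p q → IsIso (F.map (homOfLE h)) := by
    intro p q hpq hno
    apply isoSF
    apply Set.eq_empty_of_subset_empty
    calc Set.Ioc p q ∩ (SF : Set ℝ) ⊆ Set.Ioc p q ∩ (T : Set ℝ) := by
          apply Set.inter_subset_inter_right
          exact_mod_cast Finset.subset_union_left
      _ = ∅ := hno
  have isoG : ∀ (p q : ℝ) (h : p ≤ q), IntAux.NoT T p q → IsIso (G.map (homOfLE h)) := by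
    intro p q hpq hno
    apply isoSG
    apply Set.eq_empty_of_subset_empty
    calc Set.Ioc p q ∩ (SG : Set ℝ) ⊆ Set.Ioc p q ∩ (T : Set ℝ) := by
          apply Set.inter_subset_inter_right
          exact_mod_cast Finset.subset_union_right
      _ = ∅ := hno
  set E : Set ℝ := {x : ℝ | Interleaved x F G} with hE
  have hEne : E.Nonempty := h
  have hEbdd : BddBelow E := ⟨0, fun x hx => hx.choose⟩
  set m : ℝ := sInf E with hm
  have hm0 : 0 ≤ m := le_csInf hEne (fun x hx => hx.choose)
  -- choose δ avoiding the critical differences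
  set D : Finset ℝ := (T ×ˢ T).image (fun p : ℝ × ℝ => p.1 - p.2) with hD
  have hδ : ∃ δ : ℝ, 0 < δ ∧ ∀ d ∈ D, (m < d → m + δ < d) ∧ (2*m < d → 2*m + 2*δ < d) := by
    set K : Finset ℝ := ((D.filter (fun d => m < d)).image (fun d => (d - m)/2)) ∪
      ((D.filter (fun d => 2*m < d)).image (fun d => (d - 2*m)/4)) with hK
    have hne : (insert (1:ℝ) K).Nonempty := Finset.insert_nonempty _ _
    refine ⟨(insert (1:ℝ) K).min' hne, ?_, ?_⟩
    · have hmem := (insert (1:ℝ) K).min'_mem hne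
      rcases Finset.mem_insert.mp hmem with h1 | hKm
      · rw [h1]; norm_num
      · rcases Finset.mem_union.mp hKm with h2 | h2 <;>
          obtain ⟨d, hd, hdeq⟩ := Finset.mem_image.mp h2 <;>
          rw [← hdeq] <;>
          have := (Finset.mem_filter.mp hd).2 <;>
          linarith
    · intro d hd
      constructor
      · intro hmd
        have hmem : (d - m)/2 ∈ insert (1:ℝ) K := by
          apply Finset.mem_insert_of_mem
          apply Finset.mem_union_left
          exact Finset.mem_image.mpr ⟨d, Finset.mem_filter.mpr ⟨hd, hmd⟩, rfl⟩
        have := Finset.min'_le _ _ hmem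
        linarith
      · intro hmd
        have hmem : (d - 2*m)/4 ∈ insert (1:ℝ) K := by
          apply Finset.mem_insert_of_mem
          apply Finset.mem_union_right
          exact Finset.mem_image.mpr ⟨d, Finset.mem_filter.mpr ⟨hd, hmd⟩, rfl⟩
        have := Finset.min'_le _ _ hmem
        linarith
  obtain ⟨δ, hδ0, hδp⟩ := hδ
  obtain ⟨x, hxE, hxlt⟩ := exists_lt_of_csInf_lt hEne (show m < m + δ by linarith)
  have hmx : m ≤ x := csInf_le hEbdd hxE
  have hmemD : ∀ t ∈ T, ∀ u ∈ T, t - u ∈ D := by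
    intro t ht u hu
    exact Finset.mem_image.mpr ⟨(t, u), Finset.mem_product.mpr ⟨ht, hu⟩, rfl⟩
  have gap1 : ∀ t ∈ T, ∀ u ∈ T, ¬(m < t - u ∧ t - u ≤ x) := by
    rintro t ht u hu ⟨h1, h2⟩
    have := (hδp _ (hmemD t ht u hu)).1 h1
    linarith
  have gap2 : ∀ t ∈ T, ∀ u ∈ T, ¬(2*m < t - u ∧ t - u ≤ 2*x) := by
    rintro t ht u hu ⟨h1, h2⟩
    have := (hδp _ (hmemD t ht u hu)).2 h1
    linarith
  have hmI : Interleaved m F G :=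
    IntAux.transport F G T m x hm0 hmx isoF isoG gap1 gap2 hxE
  exact ⟨m, hmI, fun ε hε => csInf_le hEbdd hε⟩
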